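/- Let ρ(x,y) = 1+x²+y² and let ρ₁ be a weight function on R = [0,1]×[0,∞) with ρ₁ ≥ 1 and ρ(x,y)/ρ₁(x,y) → 0 as x²+y² → ∞ (uniformly). Then for every f ∈ C_ρ(R), ‖L_{m,n}(f) − f‖_{ρ₁} = sup_{(x,y)∈R} |L_{m,n}(f;x,y) − f(x,y)|/ρ₁(x,y) → 0 as m,n → ∞. -/

import Mathlib

set_option maxHeartbeats 8000000

open Real Set
open scoped Nat

namespace LAux

/-! ### Series lemmas for the Szász (Poisson) weights -/

lemma sum0 (l : ℝ) : Summable (fun k : ℕ => l ^ k / (k ! : ℝ)) :=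
  Real.summable_pow_div_factorial l

lemma tsum0 (l : ℝ) : ∑' k : ℕ, l ^ k / (k ! : ℝ) = Real.exp l := by
  rw [Real.exp_eq_exp_ℝ, NormedSpace.exp_eq_tsum_div]

lemma shift1 (l : ℝ) (k : ℕ) :
    ((k : ℝ) + 1) * l ^ (k + 1) / ((k + 1)! : ℝ) = l * (l ^ k / (k ! : ℝ)) := by
  rw [Nat.factorial_succ]
  have h1 : ((k ! : ℕ) : ℝ) ≠ 0 := Nat.cast_ne_zero.2 k.factorial_ne_zero
  have h2 : ((k : ℝ) + 1) ≠ 0 := by positivity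
  push_cast
  field_simp
  ring

lemma sum1 (l : ℝ) : Summable (fun k : ℕ => (k : ℝ) * l ^ k / (k ! : ℝ)) := by
  rw [← summable_nat_add_iff 1]
  have : (fun k : ℕ => ((k : ℕ) + 1 : ℝ) * l ^ (k + 1) / ((k + 1)! : ℝ))
      = fun k : ℕ => l * (l ^ k / (k ! : ℝ)) := by
    funext k; exact_mod_cast shift1 l k
  simpa [this] using (sum0 l).mul_left l

lemma tsum1 (l : ℝ) : ∑' k : ℕ, (k : ℝ) * l ^ k / (k ! : ℝ) = l * Real.exp l := by
  rw [Summable.tsum_eq_zero_add (sum1 l)]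
  simp only [Nat.cast_zero, zero_mul, zero_div, zero_add]
  rw [show (fun b : ℕ => ((b + 1 : ℕ) : ℝ) * l ^ (b + 1) / (((b + 1)! : ℕ) : ℝ))
      = fun k : ℕ => l * (l ^ k / (k ! : ℝ)) by funext k; push_cast; exact_mod_cast shift1 l k]
  rw [tsum_mul_left, tsum0]

lemma shift2 (l : ℝ) (k : ℕ) :
    ((k : ℝ) + 1) ^ 2 * l ^ (k + 1) / ((k + 1)! : ℝ)
      = l * ((k : ℝ) * l ^ k / (k ! : ℝ)) + l * (l ^ k / (k ! : ℝ)) := by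
  rw [Nat.factorial_succ]
  have h1 : ((k ! : ℕ) : ℝ) ≠ 0 := Nat.cast_ne_zero.2 k.factorial_ne_zero
  have h2 : ((k : ℝ) + 1) ≠ 0 := by positivity
  push_cast
  field_simp
  ring

lemma sum2 (l : ℝ) : Summable (fun k : ℕ => (k : ℝ) ^ 2 * l ^ k / (k ! : ℝ)) := by
  rw [← summable_nat_add_iff 1]
  have : (fun k : ℕ => ((k : ℕ) + 1 : ℝ) ^ 2 * l ^ (k + 1) / ((k + 1)! : ℝ))
      = fun k : ℕ => l * ((k : ℝ) * l ^ k / (k ! : ℝ)) + l * (l ^ k / (k ! : ℝ)) := by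
    funext k; exact_mod_cast shift2 l k
  simpa [this] using ((sum1 l).mul_left l).add ((sum0 l).mul_left l)

lemma tsum2 (l : ℝ) : ∑' k : ℕ, (k : ℝ) ^ 2 * l ^ k / (k ! : ℝ) = (l + l ^ 2) * Real.exp l := by
  rw [Summable.tsum_eq_zero_add (sum2 l)]
  simp only [Nat.cast_zero, zero_pow, zero_mul, zero_div, zero_add]
  rw [show (fun b : ℕ => ((b + 1 : ℕ) : ℝ) ^ 2 * l ^ (b + 1) / (((b + 1)! : ℕ) : ℝ))
      = fun k : ℕ => l * ((k : ℝ) * l ^ k / (k ! : ℝ)) + l * (l ^ k / (k ! : ℝ)) by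
        funext k; push_cast; exact_mod_cast shift2 l k]
  rw [Summable.tsum_add ((sum1 l).mul_left l) ((sum0 l).mul_left l), tsum_mul_left, tsum_mul_left,
    tsum1, tsum0]
  ring

/-- master summability lemma for Poisson-weighted series with quadratically bounded weights -/
lemma psummable (l : ℝ) (hl : 0 ≤ l) (g : ℕ → ℝ) (a c : ℝ)
    (hg : ∀ k : ℕ, |g k| ≤ a + c * (k : ℝ) ^ 2) :
    Summable (fun k : ℕ => Real.exp (-l) * l ^ k / (k ! : ℝ) * g k) := by
  have hmaj : Summable (fun k : ℕ =>
      Real.exp (-l) * (a * (l ^ k / (k ! : ℝ)) + c * ((k : ℝ) ^ 2 * l ^ k / (k ! : ℝ)))) :=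
    (((sum0 l).mul_left a).add ((sum2 l).mul_left c)).mul_left _
  apply Summable.of_abs
  refine Summable.of_nonneg_of_le (fun k => abs_nonneg _) (fun k => ?_) hmaj
  have hp : (0:ℝ) ≤ Real.exp (-l) * l ^ k / (k ! : ℝ) := by positivity
  rw [abs_mul, abs_of_nonneg hp]
  calc Real.exp (-l) * l ^ k / (k ! : ℝ) * |g k|
      ≤ Real.exp (-l) * l ^ k / (k ! : ℝ) * (a + c * (k : ℝ) ^ 2) :=
        mul_le_mul_of_nonneg_left (hg k) hp
    _ = Real.exp (-l) * (a * (l ^ k / (k ! : ℝ)) + c * ((k : ℝ) ^ 2 * l ^ k / (k ! : ℝ))) := by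
        ring

lemma ptsum0 (l : ℝ) : ∑' k : ℕ, Real.exp (-l) * l ^ k / (k ! : ℝ) = 1 := by
  have h : (fun k : ℕ => Real.exp (-l) * l ^ k / (k ! : ℝ))
      = fun k : ℕ => Real.exp (-l) * (l ^ k / (k ! : ℝ)) := by funext k; ring
  rw [h, tsum_mul_left, tsum0, ← Real.exp_add]
  simp

lemma psum0 (l : ℝ) : Summable (fun k : ℕ => Real.exp (-l) * l ^ k / (k ! : ℝ)) := by
  have h : (fun k : ℕ => Real.exp (-l) * l ^ k / (k ! : ℝ))
      = fun k : ℕ => Real.exp (-l) * (l ^ k / (k ! : ℝ)) := by funext k; ring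
  rw [h]; exact (sum0 l).mul_left _

/-- shifted second moment of the Poisson weights -/
lemma pshift (l c : ℝ) :
    ∑' k : ℕ, Real.exp (-l) * l ^ k / (k ! : ℝ) * ((k : ℝ) - l + c) ^ 2 = l + c ^ 2 := by
  have key : (fun k : ℕ => Real.exp (-l) * l ^ k / (k ! : ℝ) * ((k : ℝ) - l + c) ^ 2)
      = fun k : ℕ => Real.exp (-l) * ((k : ℝ) ^ 2 * l ^ k / (k ! : ℝ)
          + ((2 * (c - l)) * ((k : ℝ) * l ^ k / (k ! : ℝ))
            + (c - l) ^ 2 * (l ^ k / (k ! : ℝ)))) := by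
    funext k; ring
  rw [key, tsum_mul_left,
    Summable.tsum_add (sum2 l) (((sum1 l).mul_left _).add ((sum0 l).mul_left _)),
    Summable.tsum_add ((sum1 l).mul_left _) ((sum0 l).mul_left _), tsum_mul_left, tsum_mul_left,
    tsum0, tsum1, tsum2, Real.exp_neg]
  have h := Real.exp_ne_zero l
  field_simp
  ring

/-! ### Bernstein basis identities -/

lemma natmulsub (ν : ℕ) : ((ν * (ν - 1) : ℕ) : ℝ) = (ν : ℝ) ^ 2 - ν := by
  cases ν with
  | zero => simp
  | succ n => push_cast [Nat.succ_sub_one]; ring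

lemma bern_sum (m : ℕ) (x : ℝ) :
    ∑ ν ∈ Finset.range (m + 1), (m.choose ν : ℝ) * x ^ ν * (1 - x) ^ (m - ν) = 1 := by
  have := congrArg (Polynomial.eval x) (bernsteinPolynomial.sum ℝ m)
  simpa [bernsteinPolynomial, Polynomial.eval_finset_sum] using this

lemma bern_sum1 (m : ℕ) (x : ℝ) :
    ∑ ν ∈ Finset.range (m + 1), (ν : ℝ) * ((m.choose ν : ℝ) * x ^ ν * (1 - x) ^ (m - ν))
      = m * x := by
  have := congrArg (Polynomial.eval x) (bernsteinPolynomial.sum_smul ℝ m)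
  simpa [bernsteinPolynomial, Polynomial.eval_finset_sum, nsmul_eq_mul, mul_assoc] using this

lemma bern_sum2 (m : ℕ) (x : ℝ) :
    ∑ ν ∈ Finset.range (m + 1), (ν : ℝ) ^ 2 * ((m.choose ν : ℝ) * x ^ ν * (1 - x) ^ (m - ν))
      = m * (m - 1) * x ^ 2 + m * x := by
  have h := congrArg (Polynomial.eval x) (bernsteinPolynomial.sum_mul_smul ℝ m)
  simp only [Polynomial.eval_finset_sum, nsmul_eq_mul, Polynomial.eval_mul,
    Polynomial.eval_natCast, Polynomial.eval_pow, Polynomial.eval_X, bernsteinPolynomial,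
    Polynomial.eval_one, Polynomial.eval_sub] at h
  have h2 : ∑ ν ∈ Finset.range (m + 1),
      ((ν : ℝ) ^ 2 - ν) * ((m.choose ν : ℝ) * x ^ ν * (1 - x) ^ (m - ν))
      = ((m : ℝ) ^ 2 - m) * x ^ 2 := by
    rw [← natmulsub m]
    rw [← h]
    refine Finset.sum_congr rfl fun ν _ => ?_
    rw [← natmulsub ν]
  have h3 := bern_sum1 m x
  have h4 : ∑ ν ∈ Finset.range (m + 1),
      ((ν : ℝ) ^ 2 - ν) * ((m.choose ν : ℝ) * x ^ ν * (1 - x) ^ (m - ν))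
      = (∑ ν ∈ Finset.range (m + 1),
          (ν : ℝ) ^ 2 * ((m.choose ν : ℝ) * x ^ ν * (1 - x) ^ (m - ν)))
        - ∑ ν ∈ Finset.range (m + 1),
          (ν : ℝ) * ((m.choose ν : ℝ) * x ^ ν * (1 - x) ^ (m - ν)) := by
    rw [← Finset.sum_sub_distrib]
    exact Finset.sum_congr rfl fun ν _ => by ring
  rw [h4, h3] at h2
  nlinarith [h2]

/-- shifted second moment of the Bernstein weights -/
lemma bern_var (m : ℕ) (x c : ℝ) :
    ∑ ν ∈ Finset.range (m + 1),
        ((m.choose ν : ℝ) * x ^ ν * (1 - x) ^ (m - ν)) * ((ν : ℝ) - m * x + c) ^ 2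
      = m * x * (1 - x) + c ^ 2 := by
  have e1 := bern_sum m x
  have e2 := bern_sum1 m x
  have e3 := bern_sum2 m x
  have expand : ∑ ν ∈ Finset.range (m + 1),
      ((m.choose ν : ℝ) * x ^ ν * (1 - x) ^ (m - ν)) * ((ν : ℝ) - m * x + c) ^ 2
      = (∑ ν ∈ Finset.range (m + 1),
          (ν : ℝ) ^ 2 * ((m.choose ν : ℝ) * x ^ ν * (1 - x) ^ (m - ν)))
        + ((2 * (c - m * x)) * ∑ ν ∈ Finset.range (m + 1),
            (ν : ℝ) * ((m.choose ν : ℝ) * x ^ ν * (1 - x) ^ (m - ν))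
          + (c - m * x) ^ 2 * ∑ ν ∈ Finset.range (m + 1),
            (m.choose ν : ℝ) * x ^ ν * (1 - x) ^ (m - ν)) := by
    rw [Finset.mul_sum, Finset.mul_sum, ← Finset.sum_add_distrib, ← Finset.sum_add_distrib]
    exact Finset.sum_congr rfl fun ν _ => by ring
  rw [expand, e1, e2, e3]
  ring

/-! ### Moment bounds -/

/-- Poisson-side second moment bound -/
lemma Tmom (α₂ β₂ : ℝ) (hα₂ : 0 ≤ α₂) (hβ₂ : α₂ ≤ β₂) (n : ℕ) (hn : 1 ≤ n) (y : ℝ)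
    (hy : 0 ≤ y) :
    ∑' k : ℕ, Real.exp (-((n : ℝ) * y)) * ((n : ℝ) * y) ^ k / (k ! : ℝ)
        * (((k : ℝ) + α₂) / ((n : ℝ) + β₂) - y) ^ 2
      ≤ (2 + 2 * α₂ ^ 2 + 2 * β₂ ^ 2) * (1 + y ^ 2) / n := by
  have hn1 : (1 : ℝ) ≤ (n : ℝ) := by exact_mod_cast hn
  have hβ₂0 : 0 ≤ β₂ := le_trans hα₂ hβ₂
  have hD : (0 : ℝ) < (n : ℝ) + β₂ := by linarith
  have key : (fun k : ℕ => Real.exp (-((n : ℝ) * y)) * ((n : ℝ) * y) ^ k / (k ! : ℝ)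
      * (((k : ℝ) + α₂) / ((n : ℝ) + β₂) - y) ^ 2)
      = fun k : ℕ => (1 / ((n : ℝ) + β₂) ^ 2) *
          (Real.exp (-((n : ℝ) * y)) * ((n : ℝ) * y) ^ k / (k ! : ℝ)
            * ((k : ℝ) - (n : ℝ) * y + (α₂ - β₂ * y)) ^ 2) := by
    funext k
    have h : ((k : ℝ) + α₂) / ((n : ℝ) + β₂) - y
        = ((k : ℝ) - (n : ℝ) * y + (α₂ - β₂ * y)) / ((n : ℝ) + β₂) := by
      field_simp; ring
    rw [h, div_pow]
    ring
  rw [key, tsum_mul_left, pshift, one_div, inv_mul_eq_div,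
    div_le_div_iff₀ (by positivity) (by positivity)]
  have h1 : (α₂ - β₂ * y) ^ 2 ≤ 2 * α₂ ^ 2 + 2 * β₂ ^ 2 * y ^ 2 := by
    nlinarith [sq_nonneg (α₂ + β₂ * y)]
  have h2 : y ≤ 1 + y ^ 2 := by nlinarith [sq_nonneg (y - 1)]
  have h3 : (n : ℝ) ^ 2 ≤ ((n : ℝ) + β₂) ^ 2 := by nlinarith
  have step1 : ((n:ℝ) * y + (α₂ - β₂ * y) ^ 2) ≤ (2 + 2 * α₂ ^ 2 + 2 * β₂ ^ 2) * (1 + y ^ 2) * n := by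
    nlinarith [mul_le_mul_of_nonneg_left h2 (by linarith : (0:ℝ) ≤ (n:ℝ)),
      mul_nonneg (sq_nonneg α₂) (sq_nonneg y),
      mul_nonneg (mul_nonneg (by linarith : (0:ℝ) ≤ (n:ℝ) - 1) (sq_nonneg α₂))
        (by positivity : (0:ℝ) ≤ 1 + y ^ 2),
      mul_nonneg (mul_nonneg (by linarith : (0:ℝ) ≤ (n:ℝ) - 1) (sq_nonneg β₂))
        (by positivity : (0:ℝ) ≤ 1 + y ^ 2),
      mul_nonneg (sq_nonneg β₂) (sq_nonneg y)]
  nlinarith [mul_le_mul_of_nonneg_right step1 (by linarith : (0:ℝ) ≤ (n:ℝ)),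
    mul_le_mul_of_nonneg_left h3
      (by positivity : (0:ℝ) ≤ (2 + 2 * α₂ ^ 2 + 2 * β₂ ^ 2) * (1 + y ^ 2))]

/-- Bernstein-side second moment bound -/
lemma Smom (α₁ β₁ : ℝ) (hα₁ : 0 ≤ α₁) (hβ₁ : α₁ ≤ β₁) (m : ℕ) (hm : 1 ≤ m) (x : ℝ)
    (hx : x ∈ Icc (0:ℝ) 1) :
    ∑ ν ∈ Finset.range (m + 1),
        ((m.choose ν : ℝ) * x ^ ν * (1 - x) ^ (m - ν))
          * (((ν : ℝ) + α₁) / ((m : ℝ) + β₁) - x) ^ 2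
      ≤ (1 + (α₁ + β₁) ^ 2) / m := by
  have hm1 : (1 : ℝ) ≤ (m : ℝ) := by exact_mod_cast hm
  have hβ₁0 : 0 ≤ β₁ := le_trans hα₁ hβ₁
  have hD : (0 : ℝ) < (m : ℝ) + β₁ := by linarith
  have key : ∀ ν ∈ Finset.range (m + 1),
      ((m.choose ν : ℝ) * x ^ ν * (1 - x) ^ (m - ν))
          * (((ν : ℝ) + α₁) / ((m : ℝ) + β₁) - x) ^ 2
      = (1 / ((m : ℝ) + β₁) ^ 2) *
          (((m.choose ν : ℝ) * x ^ ν * (1 - x) ^ (m - ν))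
            * ((ν : ℝ) - m * x + (α₁ - β₁ * x)) ^ 2) := by
    intro ν _
    have h : ((ν : ℝ) + α₁) / ((m : ℝ) + β₁) - x
        = ((ν : ℝ) - m * x + (α₁ - β₁ * x)) / ((m : ℝ) + β₁) := by
      field_simp; ring
    rw [h, div_pow]
    ring
  rw [Finset.sum_congr rfl key, ← Finset.mul_sum, bern_var, one_div, inv_mul_eq_div,
    div_le_div_iff₀ (by positivity) (by positivity)]
  have hx01 : 0 ≤ x * (1 - x) := mul_nonneg hx.1 (by linarith [hx.2])
  have h1 : x * (1 - x) ≤ 1 := by nlinarith [hx.1, hx.2]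
  have h2 : (α₁ - β₁ * x) ^ 2 ≤ (α₁ + β₁) ^ 2 := by
    nlinarith [mul_nonneg (by nlinarith [hx.2] : (0:ℝ) ≤ 2 * α₁ + β₁ * (1 - x))
      (by nlinarith [hx.1] : (0:ℝ) ≤ β₁ * (1 + x))]
  have h3 : (m : ℝ) ^ 2 ≤ ((m : ℝ) + β₁) ^ 2 := by nlinarith
  have step1 : (m : ℝ) * x * (1 - x) + (α₁ - β₁ * x) ^ 2 ≤ (1 + (α₁ + β₁) ^ 2) * m := by
    nlinarith [mul_le_mul_of_nonneg_left h1 (by linarith : (0:ℝ) ≤ (m:ℝ)),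
      mul_nonneg (by linarith : (0:ℝ) ≤ (m:ℝ) - 1) (sq_nonneg (α₁ + β₁))]
  nlinarith [mul_le_mul_of_nonneg_right step1 (by linarith : (0:ℝ) ≤ (m:ℝ)),
    mul_le_mul_of_nonneg_left h3 (by positivity : (0:ℝ) ≤ 1 + (α₁ + β₁) ^ 2)]

/-- uniform continuity on the compact part gives the global pointwise estimate -/
lemma delta_bound (f : ℝ → ℝ → ℝ) (Mf : ℝ) (hM0 : 0 ≤ Mf)
    (hfc : ContinuousOn (fun p : ℝ × ℝ => f p.1 p.2) (Set.Icc 0 1 ×ˢ Set.Ici 0))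
    (hfg : ∀ x ∈ Set.Icc (0:ℝ) 1, ∀ y ∈ Set.Ici (0:ℝ), |f x y| ≤ Mf * (1 + x ^ 2 + y ^ 2))
    (S : ℝ) (hS : 0 ≤ S) (ε₁ : ℝ) (hε₁ : 0 < ε₁) :
    ∃ A : ℝ, 0 ≤ A ∧ ∀ x ∈ Icc (0:ℝ) 1, ∀ y ∈ Icc (0:ℝ) S, ∀ u ∈ Icc (0:ℝ) 1,
      ∀ v ∈ Ici (0:ℝ), |f u v - f x y| ≤ ε₁ + A * ((u - x) ^ 2 + (v - y) ^ 2) := by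
  have hK : IsCompact ((Icc (0:ℝ) 1) ×ˢ (Icc (0:ℝ) (S+1))) := isCompact_Icc.prod isCompact_Icc
  have hKsub : (Icc (0:ℝ) 1) ×ˢ (Icc (0:ℝ) (S+1)) ⊆ (Icc (0:ℝ) 1) ×ˢ (Ici (0:ℝ)) :=
    Set.prod_mono subset_rfl Set.Icc_subset_Ici_self
  have hUC := hK.uniformContinuousOn_of_continuous (hfc.mono hKsub)
  rw [Metric.uniformContinuousOn_iff] at hUC
  obtain ⟨δ, hδ, hδ'⟩ := hUC ε₁ hε₁
  set δ' : ℝ := min δ 1 with hδ'def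
  have hδ'0 : 0 < δ' := lt_min hδ one_pos
  have hδ'1 : δ' ≤ 1 := min_le_right _ _
  have hδ'δ : δ' ≤ δ := min_le_left _ _
  refine ⟨Mf * (4 + 3 * S ^ 2) / δ' ^ 2 + 2 * Mf, ?_, ?_⟩
  · have : 0 ≤ Mf * (4 + 3 * S ^ 2) / δ' ^ 2 := by
      apply div_nonneg _ (sq_nonneg _); nlinarith [sq_nonneg S]
    linarith
  intro x hx y hy u hu v hv
  set A := Mf * (4 + 3 * S ^ 2) / δ' ^ 2 + 2 * Mf with hA
  have hA0 : 0 ≤ A := by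
    have : 0 ≤ Mf * (4 + 3 * S ^ 2) / δ' ^ 2 := by
      apply div_nonneg _ (sq_nonneg _); nlinarith [sq_nonneg S]
    simp only [hA]; linarith
  set d2 := (u - x) ^ 2 + (v - y) ^ 2 with hd2
  have hd20 : 0 ≤ d2 := by positivity
  by_cases hd : d2 < δ' ^ 2
  · -- near case : use uniform continuity
    have h1 : |u - x| < δ' := by
      have h : (u - x) ^ 2 < δ' ^ 2 := by nlinarith [sq_nonneg (v - y)]
      have h' := Real.sqrt_lt_sqrt (sq_nonneg _) h
      rwa [Real.sqrt_sq_eq_abs, Real.sqrt_sq hδ'0.le] at h'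
    have h2 : |v - y| < δ' := by
      have h : (v - y) ^ 2 < δ' ^ 2 := by nlinarith [sq_nonneg (u - x)]
      have h' := Real.sqrt_lt_sqrt (sq_nonneg _) h
      rwa [Real.sqrt_sq_eq_abs, Real.sqrt_sq hδ'0.le] at h'
    have hmem1 : (u, v) ∈ (Icc (0:ℝ) 1) ×ˢ (Icc (0:ℝ) (S+1)) := by
      refine ⟨hu, hv, ?_⟩
      have h3 : v - y ≤ |v - y| := le_abs_self _
      exact le_trans (by linarith [hy.2, hδ'1] : v ≤ S + 1) le_rfl
    have hmem2 : (x, y) ∈ (Icc (0:ℝ) 1) ×ˢ (Icc (0:ℝ) (S+1)) :=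
      ⟨hx, hy.1, by linarith [hy.2]⟩
    have hdist : dist ((u, v) : ℝ × ℝ) (x, y) < δ := by
      rw [Prod.dist_eq]
      apply max_lt <;> rw [Real.dist_eq] <;> [exact lt_of_lt_of_le h1 hδ'δ;
        exact lt_of_lt_of_le h2 hδ'δ]
    have hnear := hδ' (u, v) hmem1 (x, y) hmem2 hdist
    rw [Real.dist_eq] at hnear
    have hfin : |f u v - f x y| < ε₁ := hnear
    nlinarith [mul_nonneg hA0 hd20]
  · -- far case : use the growth bound
    push_neg at hd
    have hy0 : y ∈ Ici (0:ℝ) := hy.1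
    have hb1 := hfg u hu v hv
    have hb2 := hfg x hx y hy0
    have htri : |f u v - f x y| ≤ |f u v| + |f x y| := abs_sub _ _
    have hu2 : u ^ 2 ≤ 1 := by nlinarith [hu.1, hu.2]
    have hx2 : x ^ 2 ≤ 1 := by nlinarith [hx.1, hx.2]
    have hyS : y ^ 2 ≤ S ^ 2 := by nlinarith [hy.1, hy.2]
    have hkey : Mf * (4 + 3 * S ^ 2) ≤ (Mf * (4 + 3 * S ^ 2) / δ' ^ 2) * d2 := by
      have hnn : 0 ≤ Mf * (4 + 3 * S ^ 2) := by nlinarith [sq_nonneg S]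
      rw [div_mul_eq_mul_div, le_div_iff₀ (pow_pos hδ'0 2)]
      exact mul_le_mul_of_nonneg_left hd hnn
    have hfin : |f u v| + |f x y| ≤ Mf * (4 + 3 * S ^ 2) + 2 * Mf * d2 := by
      have e1 : |f u v| ≤ Mf * (1 + u ^ 2 + v ^ 2) := hb1
      have e2 : |f x y| ≤ Mf * (1 + x ^ 2 + y ^ 2) := hb2
      nlinarith [sq_nonneg (u - x), sq_nonneg (v - y), hM0, sq_nonneg (v - 2 * y)]
    simp only [hA]
    nlinarith [hε₁.le]

lemma abs_tsum_le {g : ℕ → ℝ} (h : Summable (fun k : ℕ => |g k|)) :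
    |∑' k : ℕ, g k| ≤ ∑' k : ℕ, |g k| := by
  simpa [Real.norm_eq_abs] using
    norm_tsum_le_tsum_norm (by simpa [Real.norm_eq_abs] using h : Summable fun k : ℕ => ‖g k‖)

end LAux
/-- The bivariate Stancu–Szász type operator of the paper:
`L α₁ β₁ α₂ β₂ m n f x y = ∑_{k≥0} ∑_{ν=0}^m C(m,ν) x^ν (1-x)^{m-ν} e^{-ny}(ny)^k/k! ·
  f((ν+α₁)/(m+β₁), (k+α₂)/(n+β₂))`. -/
noncomputable def L (α₁ β₁ α₂ β₂ : ℝ) (m n : ℕ) (f : ℝ → ℝ → ℝ) (x y : ℝ) : ℝ :=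
  ∑' k : ℕ, ∑ ν ∈ Finset.range (m + 1),
    ((m.choose ν : ℝ) * x ^ ν * (1 - x) ^ (m - ν)) *
      (Real.exp (-(n * y)) * (n * y) ^ k / (Nat.factorial k : ℝ)) *
      f ((ν + α₁) / (m + β₁)) ((k + α₂) / (n + β₂))

theorem L_weighted_convergence (α₁ β₁ α₂ β₂ : ℝ) (hα₁ : 0 ≤ α₁) (hβ₁ : α₁ ≤ β₁)
    (hα₂ : 0 ≤ α₂) (hβ₂ : α₂ ≤ β₂) (ρ₁ : ℝ → ℝ → ℝ)
    (hρ₁ : ∀ x ∈ Set.Icc (0:ℝ) 1, ∀ y ∈ Set.Ici (0:ℝ), 1 ≤ ρ₁ x y)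
    (hdecay : ∀ ε > (0:ℝ), ∃ s : ℝ, ∀ x ∈ Set.Icc (0:ℝ) 1, ∀ y ∈ Set.Ici (0:ℝ),
        s ≤ x ^ 2 + y ^ 2 → (1 + x ^ 2 + y ^ 2) / ρ₁ x y < ε)
    (f : ℝ → ℝ → ℝ) (Mf : ℝ)
    (hfc : ContinuousOn (fun p : ℝ × ℝ => f p.1 p.2) (Set.Icc 0 1 ×ˢ Set.Ici 0))
    (hfg : ∀ x ∈ Set.Icc (0:ℝ) 1, ∀ y ∈ Set.Ici (0:ℝ), |f x y| ≤ Mf * (1 + x ^ 2 + y ^ 2)) :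
    ∀ ε > (0:ℝ), ∃ N : ℕ, ∀ m n : ℕ, N ≤ m → N ≤ n →
      ∀ x ∈ Set.Icc (0:ℝ) 1, ∀ y ∈ Set.Ici (0:ℝ),
        |L α₁ β₁ α₂ β₂ m n f x y - f x y| / ρ₁ x y < ε := by
  intro ε hε
  have hβ₁0 : 0 ≤ β₁ := le_trans hα₁ hβ₁
  have hβ₂0 : 0 ≤ β₂ := le_trans hα₂ hβ₂
  have hM0 : 0 ≤ Mf := by
    have h := hfg 0 (by norm_num) 0 (by norm_num)
    norm_num at h
    nlinarith [abs_nonneg (f 0 0)]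
  -- the constants
  have hC₂0 : (0:ℝ) < 2 + 2 * α₂ ^ 2 + 2 * β₂ ^ 2 := by positivity
  have hC₃0 : (0:ℝ) ≤ Mf * (6 + 4 * α₂ ^ 2 + 4 * β₂ ^ 2) := by
    apply mul_nonneg hM0; positivity
  have hden : (0:ℝ) < Mf * (6 + 4 * α₂ ^ 2 + 4 * β₂ ^ 2) + Mf + 1 := by linarith
  obtain ⟨s, hs⟩ :=
    hdecay (ε / (Mf * (6 + 4 * α₂ ^ 2 + 4 * β₂ ^ 2) + Mf + 1)) (div_pos hε hden)
  have hS0 : (0:ℝ) ≤ Real.sqrt (max s 1) := Real.sqrt_nonneg _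
  have hS2 : (Real.sqrt (max s 1)) ^ 2 = max s 1 :=
    Real.sq_sqrt (le_trans zero_le_one (le_max_right s 1))
  set S : ℝ := Real.sqrt (max s 1) with hSdef
  obtain ⟨A, hA0, hAbd⟩ := LAux.delta_bound f Mf hM0 hfc hfg S hS0 (ε / 2) (by linarith)
  obtain ⟨N₀, hN₀⟩ := exists_nat_gt
    (max 1 (2 * A * ((1 + (α₁ + β₁) ^ 2) + (2 + 2 * α₂ ^ 2 + 2 * β₂ ^ 2) * (1 + S ^ 2)) / ε))
  refine ⟨N₀, fun m n hm hn x hx y hy => ?_⟩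
  have hN₀1 : (1:ℝ) < (N₀:ℝ) := lt_of_le_of_lt (le_max_left _ _) hN₀
  have hN₀pos : (0:ℝ) < (N₀:ℝ) := by linarith
  have hN1 : 1 ≤ N₀ := by exact_mod_cast hN₀1.le
  have hm1 : 1 ≤ m := le_trans hN1 hm
  have hn1 : 1 ≤ n := le_trans hN1 hn
  have hmr : (1:ℝ) ≤ (m:ℝ) := by exact_mod_cast hm1
  have hnr : (1:ℝ) ≤ (n:ℝ) := by exact_mod_cast hn1
  have hy0 : (0:ℝ) ≤ y := hy
  have hl0 : (0:ℝ) ≤ (n:ℝ) * y := by positivity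
  have hρ1 : (1:ℝ) ≤ ρ₁ x y := hρ₁ x hx y hy
  have hρpos : (0:ℝ) < ρ₁ x y := lt_of_lt_of_le one_pos hρ1
  -- node membership
  have hu : ∀ ν ∈ Finset.range (m + 1), ((ν:ℝ) + α₁) / ((m:ℝ) + β₁) ∈ Set.Icc (0:ℝ) 1 := by
    intro ν hν
    have hν' : (ν:ℝ) ≤ (m:ℝ) := by
      exact_mod_cast Nat.lt_succ_iff.mp (Finset.mem_range.mp hν)
    constructor
    · apply div_nonneg (by positivity) (by linarith)
    · rw [div_le_one (by linarith)]; linarith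
  have hv : ∀ k : ℕ, (0:ℝ) ≤ ((k:ℝ) + α₂) / ((n:ℝ) + β₂) :=
    fun k => div_nonneg (by positivity) (by linarith)
  have hv2 : ∀ k : ℕ, (((k:ℝ) + α₂) / ((n:ℝ) + β₂)) ^ 2 ≤ 2 * (k:ℝ) ^ 2 + 2 * α₂ ^ 2 := by
    intro k
    have hvk : ((k:ℝ) + α₂) / ((n:ℝ) + β₂) ≤ (k:ℝ) + α₂ :=
      div_le_self (by positivity) (by linarith)
    nlinarith [mul_self_le_mul_self (hv k) hvk, sq_nonneg ((k:ℝ) - α₂)]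
  -- summability of the inner series
  have hsum : ∀ ν ∈ Finset.range (m + 1), Summable (fun k : ℕ =>
      Real.exp (-((n:ℝ) * y)) * ((n:ℝ) * y) ^ k / (k ! : ℝ)
        * f (((ν:ℝ) + α₁) / ((m:ℝ) + β₁)) (((k:ℝ) + α₂) / ((n:ℝ) + β₂))) := by
    intro ν hν
    refine LAux.psummable _ hl0 _ (Mf * (2 + 2 * α₂ ^ 2)) (2 * Mf) (fun k => ?_)
    have huν := hu ν hν
    have hfk := hfg _ huν _ (hv k)
    have hu2 : (((ν:ℝ) + α₁) / ((m:ℝ) + β₁)) ^ 2 ≤ 1 := by nlinarith [huν.1, huν.2]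
    calc |f (((ν:ℝ) + α₁) / ((m:ℝ) + β₁)) (((k:ℝ) + α₂) / ((n:ℝ) + β₂))|
        ≤ Mf * (1 + (((ν:ℝ) + α₁) / ((m:ℝ) + β₁)) ^ 2
            + (((k:ℝ) + α₂) / ((n:ℝ) + β₂)) ^ 2) := hfk
      _ ≤ Mf * (2 + 2 * α₂ ^ 2) + 2 * Mf * (k:ℝ) ^ 2 := by nlinarith [hv2 k, hM0, hu2]
  -- rewriting L as a finite sum of inner series
  have hLrw : L α₁ β₁ α₂ β₂ m n f x y = ∑ ν ∈ Finset.range (m + 1),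
      ((m.choose ν : ℝ) * x ^ ν * (1 - x) ^ (m - ν)) *
        ∑' k : ℕ, Real.exp (-((n:ℝ) * y)) * ((n:ℝ) * y) ^ k / (k ! : ℝ)
          * f (((ν:ℝ) + α₁) / ((m:ℝ) + β₁)) (((k:ℝ) + α₂) / ((n:ℝ) + β₂)) := by
    rw [L]
    rw [tsum_congr (fun k => Finset.sum_congr rfl (fun ν _ => mul_assoc _ _ _))]
    rw [Summable.tsum_finsetSum (fun ν hν => ((hsum ν hν).mul_left _))]
    exact Finset.sum_congr rfl fun ν _ => tsum_mul_left
  -- Bernstein weights are nonnegative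
  have hb0 : ∀ ν : ℕ, (0:ℝ) ≤ (m.choose ν : ℝ) * x ^ ν * (1 - x) ^ (m - ν) := fun ν =>
    mul_nonneg (mul_nonneg (Nat.cast_nonneg _) (pow_nonneg hx.1 _))
      (pow_nonneg (by linarith [hx.2] : (0:ℝ) ≤ 1 - x) _)
  -- summability of Poisson-weighted squared deviation
  have hVs : Summable (fun k : ℕ => Real.exp (-((n:ℝ) * y)) * ((n:ℝ) * y) ^ k / (k ! : ℝ)
      * (((k:ℝ) + α₂) / ((n:ℝ) + β₂) - y) ^ 2) := by
    refine LAux.psummable _ hl0 _ (4 * α₂ ^ 2 + 2 * y ^ 2) 4 (fun k => ?_)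
    rw [abs_of_nonneg (sq_nonneg _)]
    nlinarith [hv2 k, sq_nonneg (((k:ℝ) + α₂) / ((n:ℝ) + β₂) + y)]
  have hVmom := LAux.Tmom α₂ β₂ hα₂ hβ₂ n hn1 y hy0
  rcases le_or_gt (max s 1) (x ^ 2 + y ^ 2) with hfar | hnear
  · -- far region : use the uniform boundedness of the operators
    have hρρ := hs x hx y hy (le_trans (le_max_left _ _) hfar)
    have hVle : ∑' k : ℕ, Real.exp (-((n:ℝ) * y)) * ((n:ℝ) * y) ^ k / (k ! : ℝ)
        * (((k:ℝ) + α₂) / ((n:ℝ) + β₂) - y) ^ 2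
        ≤ (2 + 2 * α₂ ^ 2 + 2 * β₂ ^ 2) * (1 + y ^ 2) := by
      refine le_trans hVmom ?_
      exact div_le_self (by positivity) hnr
    have hTb : ∀ ν ∈ Finset.range (m + 1),
        |∑' k : ℕ, Real.exp (-((n:ℝ) * y)) * ((n:ℝ) * y) ^ k / (k ! : ℝ)
          * f (((ν:ℝ) + α₁) / ((m:ℝ) + β₁)) (((k:ℝ) + α₂) / ((n:ℝ) + β₂))|
        ≤ Mf * (6 + 4 * α₂ ^ 2 + 4 * β₂ ^ 2) * (1 + x ^ 2 + y ^ 2) := by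
      intro ν hν
      have huν := hu ν hν
      have hu2 : (((ν:ℝ) + α₁) / ((m:ℝ) + β₁)) ^ 2 ≤ 1 := by nlinarith [huν.1, huν.2]
      have hpw : ∀ k : ℕ,
          |Real.exp (-((n:ℝ) * y)) * ((n:ℝ) * y) ^ k / (k ! : ℝ)
            * f (((ν:ℝ) + α₁) / ((m:ℝ) + β₁)) (((k:ℝ) + α₂) / ((n:ℝ) + β₂))|
          ≤ Real.exp (-((n:ℝ) * y)) * ((n:ℝ) * y) ^ k / (k ! : ℝ)
            * (Mf * (2 + 2 * y ^ 2)
              + 2 * Mf * (((k:ℝ) + α₂) / ((n:ℝ) + β₂) - y) ^ 2) := by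
        intro k
        have hp0 : (0:ℝ) ≤ Real.exp (-((n:ℝ) * y)) * ((n:ℝ) * y) ^ k / (k ! : ℝ) := by
          positivity
        rw [abs_mul, abs_of_nonneg hp0]
        refine mul_le_mul_of_nonneg_left ?_ hp0
        have hfk := hfg _ huν _ (hv k)
        nlinarith [sq_nonneg (((k:ℝ) + α₂) / ((n:ℝ) + β₂) - 2 * y), hM0, hu2, hfk]
      have hGrw : (fun k : ℕ => Real.exp (-((n:ℝ) * y)) * ((n:ℝ) * y) ^ k / (k ! : ℝ)
            * (Mf * (2 + 2 * y ^ 2)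
              + 2 * Mf * (((k:ℝ) + α₂) / ((n:ℝ) + β₂) - y) ^ 2))
          = fun k : ℕ => Mf * (2 + 2 * y ^ 2)
              * (Real.exp (-((n:ℝ) * y)) * ((n:ℝ) * y) ^ k / (k ! : ℝ))
            + 2 * Mf * (Real.exp (-((n:ℝ) * y)) * ((n:ℝ) * y) ^ k / (k ! : ℝ)
              * (((k:ℝ) + α₂) / ((n:ℝ) + β₂) - y) ^ 2) := by
        funext k; ring
      have hG : Summable (fun k : ℕ => Real.exp (-((n:ℝ) * y)) * ((n:ℝ) * y) ^ k / (k ! : ℝ)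
            * (Mf * (2 + 2 * y ^ 2)
              + 2 * Mf * (((k:ℝ) + α₂) / ((n:ℝ) + β₂) - y) ^ 2)) := by
        rw [hGrw]
        exact ((LAux.psum0 _).mul_left _).add (hVs.mul_left _)
      calc |∑' k : ℕ, Real.exp (-((n:ℝ) * y)) * ((n:ℝ) * y) ^ k / (k ! : ℝ)
            * f (((ν:ℝ) + α₁) / ((m:ℝ) + β₁)) (((k:ℝ) + α₂) / ((n:ℝ) + β₂))|
          ≤ ∑' k : ℕ, |Real.exp (-((n:ℝ) * y)) * ((n:ℝ) * y) ^ k / (k ! : ℝ)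
            * f (((ν:ℝ) + α₁) / ((m:ℝ) + β₁)) (((k:ℝ) + α₂) / ((n:ℝ) + β₂))| := by
            exact LAux.abs_tsum_le ((hsum ν hν).abs)
        _ ≤ ∑' k : ℕ, Real.exp (-((n:ℝ) * y)) * ((n:ℝ) * y) ^ k / (k ! : ℝ)
            * (Mf * (2 + 2 * y ^ 2)
              + 2 * Mf * (((k:ℝ) + α₂) / ((n:ℝ) + β₂) - y) ^ 2) :=
            Summable.tsum_le_tsum hpw ((hsum ν hν).abs) hG
        _ = Mf * (2 + 2 * y ^ 2)
              * (∑' k : ℕ, Real.exp (-((n:ℝ) * y)) * ((n:ℝ) * y) ^ k / (k ! : ℝ))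
            + 2 * Mf * ∑' k : ℕ, (Real.exp (-((n:ℝ) * y)) * ((n:ℝ) * y) ^ k / (k ! : ℝ)
              * (((k:ℝ) + α₂) / ((n:ℝ) + β₂) - y) ^ 2) := by
            rw [hGrw, Summable.tsum_add ((LAux.psum0 _).mul_left _) (hVs.mul_left _),
              tsum_mul_left, tsum_mul_left]
        _ ≤ Mf * (6 + 4 * α₂ ^ 2 + 4 * β₂ ^ 2) * (1 + x ^ 2 + y ^ 2) := by
            rw [LAux.ptsum0]
            nlinarith [mul_le_mul_of_nonneg_left hVle (by linarith : (0:ℝ) ≤ 2 * Mf),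
              mul_nonneg hM0 (sq_nonneg x),
              mul_nonneg (mul_nonneg hM0 (sq_nonneg α₂)) (sq_nonneg x),
              mul_nonneg (mul_nonneg hM0 (sq_nonneg β₂)) (sq_nonneg x),
              mul_nonneg (mul_nonneg hM0 (sq_nonneg α₂)) (sq_nonneg y),
              mul_nonneg (mul_nonneg hM0 (sq_nonneg β₂)) (sq_nonneg y)]
    have hLabs : |L α₁ β₁ α₂ β₂ m n f x y|
        ≤ Mf * (6 + 4 * α₂ ^ 2 + 4 * β₂ ^ 2) * (1 + x ^ 2 + y ^ 2) := by
      rw [hLrw]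
      calc |∑ ν ∈ Finset.range (m + 1),
            ((m.choose ν : ℝ) * x ^ ν * (1 - x) ^ (m - ν)) *
              ∑' k : ℕ, Real.exp (-((n:ℝ) * y)) * ((n:ℝ) * y) ^ k / (k ! : ℝ)
                * f (((ν:ℝ) + α₁) / ((m:ℝ) + β₁)) (((k:ℝ) + α₂) / ((n:ℝ) + β₂))|
          ≤ ∑ ν ∈ Finset.range (m + 1),
            |((m.choose ν : ℝ) * x ^ ν * (1 - x) ^ (m - ν)) *
              ∑' k : ℕ, Real.exp (-((n:ℝ) * y)) * ((n:ℝ) * y) ^ k / (k ! : ℝ)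
                * f (((ν:ℝ) + α₁) / ((m:ℝ) + β₁)) (((k:ℝ) + α₂) / ((n:ℝ) + β₂))| :=
            Finset.abs_sum_le_sum_abs _ _
        _ ≤ ∑ ν ∈ Finset.range (m + 1),
            ((m.choose ν : ℝ) * x ^ ν * (1 - x) ^ (m - ν)) *
              (Mf * (6 + 4 * α₂ ^ 2 + 4 * β₂ ^ 2) * (1 + x ^ 2 + y ^ 2)) := by
            refine Finset.sum_le_sum (fun ν hν => ?_)
            rw [abs_mul, abs_of_nonneg (hb0 ν)]
            exact mul_le_mul_of_nonneg_left (hTb ν hν) (hb0 ν)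
        _ = Mf * (6 + 4 * α₂ ^ 2 + 4 * β₂ ^ 2) * (1 + x ^ 2 + y ^ 2) := by
            rw [← Finset.sum_mul, LAux.bern_sum, one_mul]
    have hfxy := hfg x hx y hy
    have hnum : |L α₁ β₁ α₂ β₂ m n f x y - f x y|
        ≤ (Mf * (6 + 4 * α₂ ^ 2 + 4 * β₂ ^ 2) + Mf) * (1 + x ^ 2 + y ^ 2) := by
      calc |L α₁ β₁ α₂ β₂ m n f x y - f x y|
          ≤ |L α₁ β₁ α₂ β₂ m n f x y| + |f x y| := abs_sub _ _
        _ ≤ (Mf * (6 + 4 * α₂ ^ 2 + 4 * β₂ ^ 2) + Mf) * (1 + x ^ 2 + y ^ 2) := by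
            nlinarith [hLabs, hfxy]
    calc |L α₁ β₁ α₂ β₂ m n f x y - f x y| / ρ₁ x y
        ≤ (Mf * (6 + 4 * α₂ ^ 2 + 4 * β₂ ^ 2) + Mf) * (1 + x ^ 2 + y ^ 2) / ρ₁ x y :=
          (div_le_div_iff_of_pos_right hρpos).mpr hnum
      _ = (Mf * (6 + 4 * α₂ ^ 2 + 4 * β₂ ^ 2) + Mf) * ((1 + x ^ 2 + y ^ 2) / ρ₁ x y) :=
          mul_div_assoc _ _ _
      _ ≤ (Mf * (6 + 4 * α₂ ^ 2 + 4 * β₂ ^ 2) + Mf)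
            * (ε / (Mf * (6 + 4 * α₂ ^ 2 + 4 * β₂ ^ 2) + Mf + 1)) :=
          mul_le_mul_of_nonneg_left hρρ.le (by linarith)
      _ < ε := by
          rw [mul_div_assoc', div_lt_iff₀ hden]
          nlinarith [hε]
  · -- compact region : Korovkin-type estimate
    have hyS : y ≤ S := by nlinarith [hS2, hy0, hS0, hnear, sq_nonneg x]
    have hyIcc : y ∈ Icc (0:ℝ) S := ⟨hy0, hyS⟩
    have hfs : Summable (fun k : ℕ =>
        Real.exp (-((n:ℝ) * y)) * ((n:ℝ) * y) ^ k / (k ! : ℝ) * f x y) :=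
      (LAux.psum0 _).mul_right _
    have hVleS : ∑' k : ℕ, Real.exp (-((n:ℝ) * y)) * ((n:ℝ) * y) ^ k / (k ! : ℝ)
        * (((k:ℝ) + α₂) / ((n:ℝ) + β₂) - y) ^ 2
        ≤ (2 + 2 * α₂ ^ 2 + 2 * β₂ ^ 2) * (1 + S ^ 2) / n := by
      refine le_trans hVmom ?_
      exact (div_le_div_iff_of_pos_right (by linarith : (0:ℝ) < (n:ℝ))).mpr
        (by nlinarith [hC₂0, hy0, hyS, hS0])
    have hTb : ∀ ν ∈ Finset.range (m + 1),
        |(∑' k : ℕ, Real.exp (-((n:ℝ) * y)) * ((n:ℝ) * y) ^ k / (k ! : ℝ)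
            * f (((ν:ℝ) + α₁) / ((m:ℝ) + β₁)) (((k:ℝ) + α₂) / ((n:ℝ) + β₂))) - f x y|
        ≤ ε / 2 + A * (((ν:ℝ) + α₁) / ((m:ℝ) + β₁) - x) ^ 2
          + A * ((2 + 2 * α₂ ^ 2 + 2 * β₂ ^ 2) * (1 + S ^ 2) / n) := by
      intro ν hν
      have huν := hu ν hν
      have hdiff : (∑' k : ℕ, Real.exp (-((n:ℝ) * y)) * ((n:ℝ) * y) ^ k / (k ! : ℝ)
            * f (((ν:ℝ) + α₁) / ((m:ℝ) + β₁)) (((k:ℝ) + α₂) / ((n:ℝ) + β₂))) - f x y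
          = ∑' k : ℕ, (Real.exp (-((n:ℝ) * y)) * ((n:ℝ) * y) ^ k / (k ! : ℝ)
            * f (((ν:ℝ) + α₁) / ((m:ℝ) + β₁)) (((k:ℝ) + α₂) / ((n:ℝ) + β₂))
            - Real.exp (-((n:ℝ) * y)) * ((n:ℝ) * y) ^ k / (k ! : ℝ) * f x y) := by
        rw [Summable.tsum_sub (hsum ν hν) hfs, tsum_mul_right, LAux.ptsum0, one_mul]
      rw [hdiff]
      have hpw : ∀ k : ℕ,
          |Real.exp (-((n:ℝ) * y)) * ((n:ℝ) * y) ^ k / (k ! : ℝ)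
            * f (((ν:ℝ) + α₁) / ((m:ℝ) + β₁)) (((k:ℝ) + α₂) / ((n:ℝ) + β₂))
            - Real.exp (-((n:ℝ) * y)) * ((n:ℝ) * y) ^ k / (k ! : ℝ) * f x y|
          ≤ Real.exp (-((n:ℝ) * y)) * ((n:ℝ) * y) ^ k / (k ! : ℝ)
            * (ε / 2 + A * ((((ν:ℝ) + α₁) / ((m:ℝ) + β₁) - x) ^ 2
              + (((k:ℝ) + α₂) / ((n:ℝ) + β₂) - y) ^ 2)) := by
        intro k
        have hp0 : (0:ℝ) ≤ Real.exp (-((n:ℝ) * y)) * ((n:ℝ) * y) ^ k / (k ! : ℝ) := by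
          positivity
        rw [show Real.exp (-((n:ℝ) * y)) * ((n:ℝ) * y) ^ k / (k ! : ℝ)
            * f (((ν:ℝ) + α₁) / ((m:ℝ) + β₁)) (((k:ℝ) + α₂) / ((n:ℝ) + β₂))
            - Real.exp (-((n:ℝ) * y)) * ((n:ℝ) * y) ^ k / (k ! : ℝ) * f x y
          = Real.exp (-((n:ℝ) * y)) * ((n:ℝ) * y) ^ k / (k ! : ℝ)
            * (f (((ν:ℝ) + α₁) / ((m:ℝ) + β₁)) (((k:ℝ) + α₂) / ((n:ℝ) + β₂)) - f x y)
          by ring]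
        rw [abs_mul, abs_of_nonneg hp0]
        exact mul_le_mul_of_nonneg_left
          (hAbd x hx y hyIcc _ huν _ (hv k)) hp0
      have hGrw : (fun k : ℕ => Real.exp (-((n:ℝ) * y)) * ((n:ℝ) * y) ^ k / (k ! : ℝ)
            * (ε / 2 + A * ((((ν:ℝ) + α₁) / ((m:ℝ) + β₁) - x) ^ 2
              + (((k:ℝ) + α₂) / ((n:ℝ) + β₂) - y) ^ 2)))
          = fun k : ℕ => (ε / 2 + A * (((ν:ℝ) + α₁) / ((m:ℝ) + β₁) - x) ^ 2)
              * (Real.exp (-((n:ℝ) * y)) * ((n:ℝ) * y) ^ k / (k ! : ℝ))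
            + A * (Real.exp (-((n:ℝ) * y)) * ((n:ℝ) * y) ^ k / (k ! : ℝ)
              * (((k:ℝ) + α₂) / ((n:ℝ) + β₂) - y) ^ 2) := by
        funext k; ring
      have hG : Summable (fun k : ℕ =>
          Real.exp (-((n:ℝ) * y)) * ((n:ℝ) * y) ^ k / (k ! : ℝ)
            * (ε / 2 + A * ((((ν:ℝ) + α₁) / ((m:ℝ) + β₁) - x) ^ 2
              + (((k:ℝ) + α₂) / ((n:ℝ) + β₂) - y) ^ 2))) := by
        rw [hGrw]
        exact ((LAux.psum0 _).mul_left _).add (hVs.mul_left _)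
      calc |∑' k : ℕ, (Real.exp (-((n:ℝ) * y)) * ((n:ℝ) * y) ^ k / (k ! : ℝ)
            * f (((ν:ℝ) + α₁) / ((m:ℝ) + β₁)) (((k:ℝ) + α₂) / ((n:ℝ) + β₂))
            - Real.exp (-((n:ℝ) * y)) * ((n:ℝ) * y) ^ k / (k ! : ℝ) * f x y)|
          ≤ ∑' k : ℕ, |Real.exp (-((n:ℝ) * y)) * ((n:ℝ) * y) ^ k / (k ! : ℝ)
            * f (((ν:ℝ) + α₁) / ((m:ℝ) + β₁)) (((k:ℝ) + α₂) / ((n:ℝ) + β₂))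
            - Real.exp (-((n:ℝ) * y)) * ((n:ℝ) * y) ^ k / (k ! : ℝ) * f x y| := by
            exact LAux.abs_tsum_le (((hsum ν hν).sub hfs).abs)
        _ ≤ ∑' k : ℕ, Real.exp (-((n:ℝ) * y)) * ((n:ℝ) * y) ^ k / (k ! : ℝ)
            * (ε / 2 + A * ((((ν:ℝ) + α₁) / ((m:ℝ) + β₁) - x) ^ 2
              + (((k:ℝ) + α₂) / ((n:ℝ) + β₂) - y) ^ 2)) :=
            Summable.tsum_le_tsum hpw (((hsum ν hν).sub hfs).abs) hG
        _ = (ε / 2 + A * (((ν:ℝ) + α₁) / ((m:ℝ) + β₁) - x) ^ 2)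
              * (∑' k : ℕ, Real.exp (-((n:ℝ) * y)) * ((n:ℝ) * y) ^ k / (k ! : ℝ))
            + A * ∑' k : ℕ, (Real.exp (-((n:ℝ) * y)) * ((n:ℝ) * y) ^ k / (k ! : ℝ)
              * (((k:ℝ) + α₂) / ((n:ℝ) + β₂) - y) ^ 2) := by
            rw [hGrw, Summable.tsum_add ((LAux.psum0 _).mul_left _) (hVs.mul_left _),
              tsum_mul_left, tsum_mul_left]
        _ ≤ ε / 2 + A * (((ν:ℝ) + α₁) / ((m:ℝ) + β₁) - x) ^ 2
            + A * ((2 + 2 * α₂ ^ 2 + 2 * β₂ ^ 2) * (1 + S ^ 2) / n) := by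
            rw [LAux.ptsum0, mul_one]
            nlinarith [mul_le_mul_of_nonneg_left hVleS hA0]
    -- assembling the estimate on the compact part
    have hsplit : L α₁ β₁ α₂ β₂ m n f x y - f x y
        = ∑ ν ∈ Finset.range (m + 1),
            ((m.choose ν : ℝ) * x ^ ν * (1 - x) ^ (m - ν)) *
              ((∑' k : ℕ, Real.exp (-((n:ℝ) * y)) * ((n:ℝ) * y) ^ k / (k ! : ℝ)
                * f (((ν:ℝ) + α₁) / ((m:ℝ) + β₁)) (((k:ℝ) + α₂) / ((n:ℝ) + β₂))) - f x y) := by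
      rw [hLrw]
      rw [Finset.sum_congr rfl (fun ν _ => mul_sub
        ((m.choose ν : ℝ) * x ^ ν * (1 - x) ^ (m - ν)) _ (f x y))]
      rw [Finset.sum_sub_distrib, ← Finset.sum_mul, LAux.bern_sum, one_mul]
    have hSb := LAux.Smom α₁ β₁ hα₁ hβ₁ m hm1 x hx
    have habs2 : |L α₁ β₁ α₂ β₂ m n f x y - f x y|
        ≤ ε / 2 + A * ((1 + (α₁ + β₁) ^ 2) / m)
          + A * ((2 + 2 * α₂ ^ 2 + 2 * β₂ ^ 2) * (1 + S ^ 2) / n) := by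
      rw [hsplit]
      calc |∑ ν ∈ Finset.range (m + 1),
            ((m.choose ν : ℝ) * x ^ ν * (1 - x) ^ (m - ν)) *
              ((∑' k : ℕ, Real.exp (-((n:ℝ) * y)) * ((n:ℝ) * y) ^ k / (k ! : ℝ)
                * f (((ν:ℝ) + α₁) / ((m:ℝ) + β₁)) (((k:ℝ) + α₂) / ((n:ℝ) + β₂))) - f x y)|
          ≤ ∑ ν ∈ Finset.range (m + 1),
            |((m.choose ν : ℝ) * x ^ ν * (1 - x) ^ (m - ν)) *
              ((∑' k : ℕ, Real.exp (-((n:ℝ) * y)) * ((n:ℝ) * y) ^ k / (k ! : ℝ)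
                * f (((ν:ℝ) + α₁) / ((m:ℝ) + β₁)) (((k:ℝ) + α₂) / ((n:ℝ) + β₂))) - f x y)| :=
            Finset.abs_sum_le_sum_abs _ _
        _ ≤ ∑ ν ∈ Finset.range (m + 1),
            ((m.choose ν : ℝ) * x ^ ν * (1 - x) ^ (m - ν)) *
              (ε / 2 + A * (((ν:ℝ) + α₁) / ((m:ℝ) + β₁) - x) ^ 2
                + A * ((2 + 2 * α₂ ^ 2 + 2 * β₂ ^ 2) * (1 + S ^ 2) / n)) := by
            refine Finset.sum_le_sum (fun ν hν => ?_)
            rw [abs_mul, abs_of_nonneg (hb0 ν)]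
            exact mul_le_mul_of_nonneg_left (hTb ν hν) (hb0 ν)
        _ = (ε / 2 + A * ((2 + 2 * α₂ ^ 2 + 2 * β₂ ^ 2) * (1 + S ^ 2) / n))
              * (∑ ν ∈ Finset.range (m + 1),
                (m.choose ν : ℝ) * x ^ ν * (1 - x) ^ (m - ν))
            + A * ∑ ν ∈ Finset.range (m + 1),
                ((m.choose ν : ℝ) * x ^ ν * (1 - x) ^ (m - ν))
                  * (((ν:ℝ) + α₁) / ((m:ℝ) + β₁) - x) ^ 2 := by
            rw [Finset.mul_sum, Finset.mul_sum, ← Finset.sum_add_distrib]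
            exact Finset.sum_congr rfl fun ν _ => by ring
        _ ≤ ε / 2 + A * ((1 + (α₁ + β₁) ^ 2) / m)
            + A * ((2 + 2 * α₂ ^ 2 + 2 * β₂ ^ 2) * (1 + S ^ 2) / n) := by
            rw [LAux.bern_sum, mul_one]
            nlinarith [mul_le_mul_of_nonneg_left hSb hA0]
    -- numerical conclusion
    have hmN : (N₀:ℝ) ≤ (m:ℝ) := by exact_mod_cast hm
    have hnN : (N₀:ℝ) ≤ (n:ℝ) := by exact_mod_cast hn
    have hNbig : 2 * A * ((1 + (α₁ + β₁) ^ 2)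
        + (2 + 2 * α₂ ^ 2 + 2 * β₂ ^ 2) * (1 + S ^ 2)) / ε < (N₀:ℝ) :=
      lt_of_le_of_lt (le_max_right _ _) hN₀
    have hterm : A * ((1 + (α₁ + β₁) ^ 2) / m)
        + A * ((2 + 2 * α₂ ^ 2 + 2 * β₂ ^ 2) * (1 + S ^ 2) / n) < ε / 2 := by
      have hnum1 : (0:ℝ) ≤ A * (1 + (α₁ + β₁) ^ 2) := by positivity
      have hnum2 : (0:ℝ) ≤ A * ((2 + 2 * α₂ ^ 2 + 2 * β₂ ^ 2) * (1 + S ^ 2)) := by positivity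
      have h1 : A * ((1 + (α₁ + β₁) ^ 2) / m) ≤ A * (1 + (α₁ + β₁) ^ 2) / N₀ := by
        rw [mul_div_assoc']
        exact div_le_div_of_nonneg_left hnum1 hN₀pos hmN
      have h2 : A * ((2 + 2 * α₂ ^ 2 + 2 * β₂ ^ 2) * (1 + S ^ 2) / n)
          ≤ A * ((2 + 2 * α₂ ^ 2 + 2 * β₂ ^ 2) * (1 + S ^ 2)) / N₀ := by
        rw [mul_div_assoc']
        exact div_le_div_of_nonneg_left hnum2 hN₀pos hnN
      have h3 : A * (1 + (α₁ + β₁) ^ 2) / N₀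
          + A * ((2 + 2 * α₂ ^ 2 + 2 * β₂ ^ 2) * (1 + S ^ 2)) / N₀ < ε / 2 := by
        rw [← add_div, div_lt_iff₀ hN₀pos]
        rw [div_lt_iff₀ hε] at hNbig
        linarith [hNbig]
      linarith
    calc |L α₁ β₁ α₂ β₂ m n f x y - f x y| / ρ₁ x y
        ≤ |L α₁ β₁ α₂ β₂ m n f x y - f x y| := div_le_self (abs_nonneg _) hρ1
      _ < ε := by linarith [habs2, hterm]
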